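/- (Radon–Nikodym, direct part) Let φ : G → L(H) be α-completely positive with minimal Stinespring construction (π_φ, (H_φ, J_φ), V_φ). Let T ∈ L(H_φ) be positive, commuting with π_φ(g) for all g ∈ G, and with T J_φ = J_φ T. Then the map φ_T : G → L(H) defined by φ_T(g) = V_φ* T π_φ(g) V_φ is α-completely positive. -/

import Mathlib

set_option maxHeartbeats 1000000
set_option synthInstance.maxHeartbeats 400000


open scoped ComplexOrder

noncomputable section

def IsInvolution (G : Type*) [Group G] (α : G → G) : Prop :=
  (∀ g, α (α g) = g) ∧ α 1 = 1 ∧ ∀ g : G, α g⁻¹ = (α g)⁻¹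

def IsAlphaCP {G : Type*} [Group G] (α : G → G)
    {H : Type*} [NormedAddCommGroup H] [InnerProductSpace ℂ H] [CompleteSpace H]
    (φ : G → H →L[ℂ] H) : Prop :=
  (∀ g₁ g₂ : G, φ (α g₁ * α g₂) = φ (α (g₁ * g₂)) ∧ φ (α (g₁ * g₂)) = φ (g₁ * g₂)) ∧
  (∀ (n : ℕ) (g : Fin n → G) (ξ : Fin n → H),
    0 ≤ ∑ i, ∑ j, (inner ℂ (φ ((α (g i))⁻¹ * g j) (ξ j)) (ξ i) : ℂ)) ∧
  (∃ K > (0 : ℝ), ∀ (n : ℕ) (g : Fin n → G) (ξ : Fin n → H),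
    ∑ i, ∑ j, (inner ℂ (((ContinuousLinearMap.adjoint (φ (g i))) ∘L φ (g j)) (ξ j)) (ξ i) : ℂ) ≤
      (K : ℂ) * ∑ i, ∑ j, (inner ℂ (φ ((α (g i))⁻¹ * g j) (ξ j)) (ξ i) : ℂ)) ∧
  (∀ g : G, ∃ M > (0 : ℝ), ∀ (n : ℕ) (gs : Fin n → G) (ξ : Fin n → H),
    ∑ i, ∑ j, (inner ℂ (φ ((α (g * gs i))⁻¹ * (g * gs j)) (ξ j)) (ξ i) : ℂ) ≤
      (M : ℂ) * ∑ i, ∑ j, (inner ℂ (φ ((α (gs i))⁻¹ * gs j) (ξ j)) (ξ i) : ℂ))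

structure KreinDilation (G : Type*) [Group G] (α : G → G)
    (H : Type*) [NormedAddCommGroup H] [InnerProductSpace ℂ H] [CompleteSpace H]
    (φ : G → H →L[ℂ] H) where
  K : Type
  [nK : NormedAddCommGroup K]
  [iK : InnerProductSpace ℂ K]
  [cK : CompleteSpace K]
  J : K →L[ℂ] K
  rep : G → K →L[ℂ] K
  V : H →L[ℂ] K
  J_sa : ContinuousLinearMap.adjoint J = J
  J_inv : J ∘L J = 1
  rep_one : rep 1 = 1
  rep_mul : ∀ g g', rep (g * g') = rep g ∘L rep g'
  rep_inv : ∀ g, rep g⁻¹ = J ∘L (ContinuousLinearMap.adjoint (rep g)) ∘L J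
  eq : ∀ g, φ g = (ContinuousLinearMap.adjoint V) ∘L rep g ∘L V
  minimal : (Submodule.span ℂ {x : K | ∃ g ξ, x = rep g (V ξ)}).topologicalClosure = ⊤
  commJ : ∀ g, J ∘L rep g ∘L V = rep (α g) ∘L V

attribute [instance] KreinDilation.nK KreinDilation.iK KreinDilation.cK

lemma cfc_mem_elemental_aux {A : Type*} [CStarAlgebra A] (a : A) (f : ℂ → ℂ) :
    cfc f a ∈ StarAlgebra.elemental ℂ a := by
  refine cfc_cases (· ∈ StarAlgebra.elemental ℂ a) a f (zero_mem _) fun hf ha ↦ ?_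
  haveI : IsStarNormal a := ha
  rw [show cfcHom ha = (StarAlgebra.elemental ℂ a).subtype.comp (continuousFunctionalCalculus a)
      from cfcHom_eq_of_isStarNormal a]
  exact SetLike.coe_mem _

lemma commute_sqrt_aux {K : Type*} [NormedAddCommGroup K] [InnerProductSpace ℂ K]
    [CompleteSpace K] (T S : K →L[ℂ] K) (hT : 0 ≤ T)
    (h1 : S * T = T * S) (h2 : star S * T = T * star S) :
    S * CFC.sqrt T = CFC.sqrt T * S := by
  have hTsa : IsSelfAdjoint T := .of_nonneg hT
  haveI : IsStarNormal T := hTsa.isStarNormal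
  have hmem : CFC.sqrt T ∈ StarAlgebra.elemental ℂ T := by
    rw [CFC.sqrt_eq_cfc, cfc_nnreal_eq_real _ T hT, cfc_real_eq_complex]
    exact cfc_mem_elemental_aux _ _
  have hset : ((StarSubalgebra.centralizer ℂ {S} : StarSubalgebra ℂ (K →L[ℂ] K)) :
      Set (K →L[ℂ] K)) = {x | S * x = x * S} ∩ {x | star S * x = x * star S} := by
    ext x
    simp only [SetLike.mem_coe, StarSubalgebra.mem_centralizer_iff, Set.mem_singleton_iff,
      forall_eq, Set.mem_inter_iff, Set.mem_setOf_eq]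
  have hcentcl : IsClosed ((StarSubalgebra.centralizer ℂ {S} : StarSubalgebra ℂ (K →L[ℂ] K)) :
      Set (K →L[ℂ] K)) := by
    rw [hset]
    exact (isClosed_eq (continuous_const.mul continuous_id) (continuous_id.mul continuous_const)).inter
      (isClosed_eq (continuous_const.mul continuous_id) (continuous_id.mul continuous_const))
  have hle : StarAlgebra.elemental ℂ T ≤ StarSubalgebra.centralizer ℂ {S} :=
    StarAlgebra.elemental.le_of_mem hcentcl (by
      rw [StarSubalgebra.mem_centralizer_iff]
      rintro g rfl
      exact ⟨h1, h2⟩)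
  have := hle hmem
  rw [StarSubalgebra.mem_centralizer_iff] at this
  exact (this S rfl).1

open ContinuousLinearMap in
theorem radon_nikodym_direct {G : Type*} [Group G] (α : G → G)
    {H : Type*} [NormedAddCommGroup H] [InnerProductSpace ℂ H] [CompleteSpace H]
    (φ : G → H →L[ℂ] H) (hα : IsInvolution G α) (hφ : IsAlphaCP α φ)
    (D : KreinDilation G α H φ)
    (T : D.K →L[ℂ] D.K) (hT : T.IsPositive)
    (hTcomm : ∀ g : G, T ∘L D.rep g = D.rep g ∘L T)
    (hTJ : T ∘L D.J = D.J ∘L T) :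
    IsAlphaCP α (fun g => adjoint D.V ∘L T ∘L D.rep g ∘L D.V) := by
  obtain ⟨hαα, hα1, hαinv⟩ := hα
  set J := D.J with hJ
  have hJsa : ContinuousLinearMap.adjoint J = J := by rw [hJ]; exact D.J_sa
  set V := D.V with hV
  -- basic pointwise facts
  have hJJ : ∀ x : D.K, J (J x) = x := by
    intro x
    have := congrFun (congrArg (fun (A : D.K →L[ℂ] D.K) => (A : D.K → D.K)) D.J_inv) x
    simpa using this
  have hJVop : J ∘L V = V := by
    have := D.commJ 1
    rw [hα1, D.rep_one] at this
    rw [one_def, id_comp] at this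
    exact this
  have hJV : ∀ x : H, J (V x) = V x := fun x =>
    congrFun (congrArg (fun (A : H →L[ℂ] D.K) => (A : H → D.K)) hJVop) x
  have hTJ' : ∀ x : D.K, T (J x) = J (T x) := fun x =>
    congrFun (congrArg (fun (A : D.K →L[ℂ] D.K) => (A : D.K → D.K)) hTJ) x
  have hTrep : ∀ (g : G) (x : D.K), T (D.rep g x) = D.rep g (T x) := fun g x =>
    congrFun (congrArg (fun (A : D.K →L[ℂ] D.K) => (A : D.K → D.K)) (hTcomm g)) x
  have hTsa : adjoint T = T := by
    have := hT.isSelfAdjoint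
    rwa [IsSelfAdjoint, star_eq_adjoint] at this
  have hTadjop : ∀ g : G, T ∘L adjoint (D.rep g) = adjoint (D.rep g) ∘L T := by
    intro g
    have := congrArg adjoint (hTcomm g)
    rw [adjoint_comp, adjoint_comp, hTsa] at this
    exact this.symm
  have hTadj : ∀ (g : G) (x : D.K), T (adjoint (D.rep g) x) = adjoint (D.rep g) (T x) :=
    fun g x => congrFun (congrArg (fun (A : D.K →L[ℂ] D.K) => (A : D.K → D.K)) (hTadjop g)) x
  have hrepinv : ∀ (g : G) (x : D.K), D.rep g⁻¹ x = J (adjoint (D.rep g) (J x)) := by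
    intro g x
    have := congrFun (congrArg (fun (A : D.K →L[ℂ] D.K) => (A : D.K → D.K)) (D.rep_inv g)) x
    simpa using this
  have hrepadj : ∀ (g : G) (x : D.K), adjoint (D.rep g) x = J (D.rep g⁻¹ (J x)) := by
    intro g x
    rw [hrepinv g (J x), hJJ, hJJ]
  have hcommJ : ∀ (g : G) (x : H), J (D.rep g (V x)) = D.rep (α g) (V x) := fun g x =>
    congrFun (congrArg (fun (A : H →L[ℂ] D.K) => (A : H → D.K)) (D.commJ g)) x
  have hrepmul : ∀ (g g' : G) (x : D.K), D.rep (g * g') x = D.rep g (D.rep g' x) := fun g g' x =>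
    congrFun (congrArg (fun (A : D.K →L[ℂ] D.K) => (A : D.K → D.K)) (D.rep_mul g g')) x
  have hVadjJ : ∀ x : D.K, adjoint V (J x) = adjoint V x := by
    intro x
    have h : adjoint V ∘L J = adjoint V := by
      have := congrArg adjoint hJVop
      rwa [adjoint_comp, D.J_sa] at this
    exact congrFun (congrArg (fun (A : D.K →L[ℂ] H) => (A : D.K → H)) h) x
  -- key lemma L : V† (rep (α a) (J y)) = V† (rep a y)
  have hL : ∀ (a : G) (y : D.K), adjoint V (D.rep (α a) (J y)) = adjoint V (D.rep a y) := by
    intro a y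
    have hadj : adjoint (adjoint V ∘L (D.rep (α a) ∘L J)) = adjoint (adjoint V ∘L D.rep a) := by
      ext x
      simp only [adjoint_comp, adjoint_adjoint, coe_comp', Function.comp_apply, hJsa]
      rw [hrepadj (α a), hrepadj a, hJJ, hJV, ← hαinv a, ← hcommJ a⁻¹ x]
    have := congrArg adjoint hadj
    rw [adjoint_adjoint, adjoint_adjoint] at this
    exact congrFun (congrArg (fun (A : D.K →L[ℂ] H) => (A : D.K → H)) this) y
  -- square root of T
  have hT0 : (0 : D.K →L[ℂ] D.K) ≤ T := (ContinuousLinearMap.nonneg_iff_isPositive T).mpr hT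
  set R := CFC.sqrt T with hR
  have hRR : R * R = T := CFC.sqrt_mul_sqrt_self T hT0
  have hR0 : (0 : D.K →L[ℂ] D.K) ≤ R := CFC.sqrt_nonneg T
  have hRsa : adjoint R = R := by
    have : IsSelfAdjoint R := .of_nonneg hR0
    rwa [IsSelfAdjoint, star_eq_adjoint] at this
  have hTapp : ∀ x : D.K, T x = R (R x) := by
    intro x
    have := congrFun (congrArg (fun (A : D.K →L[ℂ] D.K) => (A : D.K → D.K)) hRR) x
    simpa [mul_apply] using this.symm
  have hinner : ∀ x : D.K, (inner ℂ (T x) x : ℂ) = ((‖R x‖ ^ 2 : ℝ) : ℂ) := by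
    intro x
    rw [hTapp x, ← hRsa, adjoint_inner_left, hRsa, inner_self_eq_norm_sq_to_K]
    norm_cast
  have hinner_nonneg : ∀ x : D.K, (0 : ℂ) ≤ (inner ℂ (T x) x : ℂ) := by
    intro x
    rw [hinner x]
    exact_mod_cast Complex.zero_le_real.mpr (by positivity)
  -- termwise identity
  have term : ∀ (a b : G) (x y : H),
      (inner ℂ ((adjoint V ∘L T ∘L D.rep ((α a)⁻¹ * b) ∘L V) x) y : ℂ)
        = inner ℂ (T (D.rep b (V x))) (D.rep a (V y)) := by
    intro a b x y
    simp only [coe_comp', Function.comp_apply]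
    rw [adjoint_inner_left]
    rw [hrepmul (α a)⁻¹ b]
    rw [hrepinv (α a) (D.rep b (V x))]
    rw [hTJ', hTadj, hTJ']
    -- now : ⟪ J ((rep (α a))† (J (T (rep b (V x))))), V y ⟫
    have hJmove : ∀ u v : D.K, (inner ℂ (J u) v : ℂ) = inner ℂ u (J v) := by
      intro u v
      rw [← hJsa, adjoint_inner_left, hJsa]
    rw [hJmove, hJV, adjoint_inner_left, ← hcommJ a y, hJmove, hJJ]
  -- sum identity
  have key : ∀ (n : ℕ) (g : Fin n → G) (ξ : Fin n → H),
      (∑ i, ∑ j, (inner ℂ ((adjoint V ∘L T ∘L D.rep ((α (g i))⁻¹ * g j) ∘L V) (ξ j)) (ξ i) : ℂ))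
        = inner ℂ (T (∑ j, D.rep (g j) (V (ξ j)))) (∑ i, D.rep (g i) (V (ξ i))) := by
    intro n g ξ
    rw [map_sum, sum_inner]
    rw [Finset.sum_comm]
    refine Finset.sum_congr rfl fun j _ => ?_
    rw [inner_sum]
    refine Finset.sum_congr rfl fun i _ => ?_
    exact term (g i) (g j) (ξ j) (ξ i)
  refine ⟨?_, ?_, ?_, ?_⟩
  · -- condition 1
    intro g₁ g₂
    constructor
    · ext x
      simp only [coe_comp', Function.comp_apply]
      rw [hrepmul (α g₁) (α g₂), ← hcommJ g₂ x, hTrep, hTJ', hL g₁, ← hTrep, ← hrepmul,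
        ← hcommJ (g₁ * g₂) x, hTJ', hVadjJ]
    · ext x
      simp only [coe_comp', Function.comp_apply]
      rw [← hcommJ (g₁ * g₂) x, hTJ', hVadjJ]
  · -- condition 2 : positivity
    intro n g ξ
    rw [key n g ξ]
    exact hinner_nonneg _
  · -- condition 3
    refine ⟨‖adjoint V‖ ^ 2 * ‖R‖ ^ 2 + 1, by positivity, ?_⟩
    intro n g ξ
    rw [key n g ξ]
    set s := ∑ j, D.rep (g j) (V (ξ j)) with hs
    have hLHS : (∑ i, ∑ j, (inner ℂ (((adjoint ((fun g => adjoint V ∘L T ∘L D.rep g ∘L V) (g i)))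
        ∘L ((fun g => adjoint V ∘L T ∘L D.rep g ∘L V) (g j))) (ξ j)) (ξ i) : ℂ))
        = ((‖adjoint V (T s)‖ ^ 2 : ℝ) : ℂ) := by
      have : ∀ i j, (inner ℂ (((adjoint ((fun g => adjoint V ∘L T ∘L D.rep g ∘L V) (g i)))
          ∘L ((fun g => adjoint V ∘L T ∘L D.rep g ∘L V) (g j))) (ξ j)) (ξ i) : ℂ)
          = inner ℂ ((adjoint V ∘L T ∘L D.rep (g j) ∘L V) (ξ j))
              ((adjoint V ∘L T ∘L D.rep (g i) ∘L V) (ξ i)) := by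
        intro i j
        simp only [coe_comp', Function.comp_apply]
        rw [adjoint_inner_left]
        simp only [coe_comp', Function.comp_apply]
      calc (∑ i, ∑ j, (inner ℂ (((adjoint ((fun g => adjoint V ∘L T ∘L D.rep g ∘L V) (g i)))
            ∘L ((fun g => adjoint V ∘L T ∘L D.rep g ∘L V) (g j))) (ξ j)) (ξ i) : ℂ))
          = ∑ i, ∑ j, (inner ℂ ((adjoint V ∘L T ∘L D.rep (g j) ∘L V) (ξ j))
              ((adjoint V ∘L T ∘L D.rep (g i) ∘L V) (ξ i)) : ℂ) := by
            exact Finset.sum_congr rfl fun i _ => Finset.sum_congr rfl fun j _ => this i j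
        _ = inner ℂ (∑ j, (adjoint V ∘L T ∘L D.rep (g j) ∘L V) (ξ j))
              (∑ i, (adjoint V ∘L T ∘L D.rep (g i) ∘L V) (ξ i)) := by
            rw [sum_inner, Finset.sum_comm]
            refine Finset.sum_congr rfl fun j _ => ?_
            rw [inner_sum]
        _ = ((‖adjoint V (T s)‖ ^ 2 : ℝ) : ℂ) := by
            have hsum : (∑ j, (adjoint V ∘L T ∘L D.rep (g j) ∘L V) (ξ j)) = adjoint V (T s) := by
              rw [hs, map_sum, map_sum]
              simp only [coe_comp', Function.comp_apply]
            rw [hsum, inner_self_eq_norm_sq_to_K]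
            norm_cast
    rw [hLHS, hinner s]
    rw [← Complex.ofReal_mul, Complex.real_le_real]
    have h1 : ‖adjoint V (T s)‖ ≤ ‖adjoint V‖ * (‖R‖ * ‖R s‖) := by
      calc ‖adjoint V (T s)‖ ≤ ‖adjoint V‖ * ‖T s‖ := le_opNorm _ _
        _ ≤ ‖adjoint V‖ * (‖R‖ * ‖R s‖) := by
            refine mul_le_mul_of_nonneg_left ?_ (norm_nonneg _)
            rw [hTapp s]
            exact le_opNorm _ _
    have h2 : (0:ℝ) ≤ ‖adjoint V (T s)‖ := norm_nonneg _
    have h3 : (0:ℝ) ≤ ‖R s‖ := norm_nonneg _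
    have h4 : (0:ℝ) ≤ ‖adjoint V‖ := norm_nonneg _
    have h5 : (0:ℝ) ≤ ‖R‖ := norm_nonneg _
    nlinarith [sq_nonneg (‖R s‖), mul_le_mul h1 h1 h2 (by positivity)]
  · -- condition 4
    intro g
    refine ⟨‖D.rep g‖ ^ 2 + 1, by positivity, ?_⟩
    intro n gs ξ
    rw [key n (fun i => g * gs i) ξ, key n gs ξ]
    set s := ∑ j, D.rep (gs j) (V (ξ j)) with hs
    have hsum : (∑ j, D.rep (g * gs j) (V (ξ j))) = D.rep g s := by
      rw [hs, map_sum]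
      exact Finset.sum_congr rfl fun j _ => hrepmul g (gs j) (V (ξ j))
    rw [hsum, hinner, hinner]
    rw [← Complex.ofReal_mul, Complex.real_le_real]
    -- R commutes with rep g
    have hcomm : D.rep g * R = R * D.rep g := by
      refine commute_sqrt_aux T (D.rep g) hT0 ?_ ?_
      · rw [mul_def, mul_def, ← hTcomm g]
      · rw [star_eq_adjoint, mul_def, mul_def, ← hTadjop g]
    have hRrep : R (D.rep g s) = D.rep g (R s) := by
      have := congrFun (congrArg (fun (A : D.K →L[ℂ] D.K) => (A : D.K → D.K)) hcomm) s
      simpa [mul_apply] using this.symm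
    rw [hRrep]
    have h1 : ‖D.rep g (R s)‖ ≤ ‖D.rep g‖ * ‖R s‖ := le_opNorm _ _
    have h3 : (0:ℝ) ≤ ‖R s‖ := norm_nonneg _
    have h5 : (0:ℝ) ≤ ‖D.rep g‖ := norm_nonneg _
    nlinarith [sq_nonneg (‖R s‖), mul_le_mul h1 h1 (norm_nonneg _) (by positivity)]
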